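/- arXiv:1010.0133 — 5 statements merged into one kernel-verified Lean document; each statement's English description precedes it below -/
import Mathlib

section
/- Let m ≥ 1 and let t ≥ 3 be an odd integer. Let c_1,…,c_t ∈ [m] be colors with c_{i+1} ≠ c_i for i = 1,…,t−1 and c_1 ≠ c_t. Then the element α = x_{c_t,c_2} · x_{c_1,c_3} · x_{c_2,c_4} ⋯ x_{c_{t−2},c_t} · x_{c_{t−1},c_1} (i.e., the product over i = 1,…,t of x_{c_{i−1},c_{i+1}}, indices taken modulo t) is not the identity element of the semi-free group Γ_{KG(m,2)}. -/
/-- The semi-free group (right-angled Artin group) of a simple graph `H`: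
generators are the vertices of `H`, with relations `x*y = y*x` for each edge `xy`. -/
def semifreeRels {V : Type} (H : SimpleGraph V) : Set (FreeGroup V) :=
  {r | ∃ x y : V, H.Adj x y ∧
    r = FreeGroup.of x * FreeGroup.of y * (FreeGroup.of x)⁻¹ * (FreeGroup.of y)⁻¹}

/-- The semi-free group `Γ_H` of a simple graph `H`. -/
abbrev SemifreeGroup {V : Type} (H : SimpleGraph V) : Type :=
  PresentedGroup (semifreeRels H)

/-- The Kneser graph `KG(m,2)`: vertices are the 2-element subsets of `[m]`
(modelled as `Fin m`), adjacent iff disjoint. -/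
def kneser (m : ℕ) : SimpleGraph {s : Finset (Fin m) // s.card = 2} where
  Adj s t := Disjoint s.1 t.1
  symm := ⟨fun _ _ h => h.symm⟩
  loopless := ⟨fun s h => by
    have hs : s.1 = ∅ := disjoint_self.mp h
    have := s.2
    rw [hs] at this
    simp at this⟩

/-- The element `x_{i,j}` of the semi-free group `Γ_{KG(m,2)}`: the identity if `i = j`,
the generator `{i,j}` if `i < j`, and its inverse if `j < i`. -/
def xgen (m : ℕ) (i j : Fin m) : SemifreeGroup (kneser m) :=
  if h : i = j then 1
  else if i < j then PresentedGroup.of ⟨({i, j} : Finset (Fin m)), Finset.card_pair h⟩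
  else (PresentedGroup.of ⟨({i, j} : Finset (Fin m)), Finset.card_pair h⟩)⁻¹

/- ---------------- Auxiliary material ---------------- -/

lemma swap_commute_of_ne {α : Type*} [DecidableEq α] {a b x y : α}
    (h1 : a ≠ x) (h2 : a ≠ y) (h3 : b ≠ x) (h4 : b ≠ y) :
    Commute (Equiv.swap a b) (Equiv.swap x y) := by
  apply Equiv.ext
  intro z
  simp only [Equiv.Perm.mul_apply, Equiv.swap_apply_def]
  split_ifs <;> simp_all

lemma pair_nonempty {m : ℕ} (s : {s : Finset (Fin m) // s.card = 2}) : s.1.Nonempty :=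
  Finset.card_pos.mp (by rw [s.2]; omega)

/-- Send a 2-element subset to the transposition of its two elements. -/
def pairSwap {m : ℕ} (s : {s : Finset (Fin m) // s.card = 2}) : Equiv.Perm (Fin m) :=
  Equiv.swap (s.1.min' (pair_nonempty s)) (s.1.max' (pair_nonempty s))

lemma min'_pair {m : ℕ} (i j : Fin m) (hne : ({i,j} : Finset (Fin m)).Nonempty) :
    ({i,j} : Finset (Fin m)).min' hne = min i j := by
  apply le_antisymm
  · exact le_min (Finset.min'_le _ _ (by simp)) (Finset.min'_le _ _ (by simp))
  · apply Finset.le_min'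
    intro y hy
    rcases Finset.mem_insert.mp hy with h | h
    · exact h ▸ min_le_left _ _
    · exact (Finset.mem_singleton.mp h) ▸ min_le_right _ _

lemma max'_pair {m : ℕ} (i j : Fin m) (hne : ({i,j} : Finset (Fin m)).Nonempty) :
    ({i,j} : Finset (Fin m)).max' hne = max i j := by
  apply le_antisymm
  · apply Finset.max'_le
    intro y hy
    rcases Finset.mem_insert.mp hy with h | h
    · exact h ▸ le_max_left _ _
    · exact (Finset.mem_singleton.mp h) ▸ le_max_right _ _
  · exact max_le (Finset.le_max' _ _ (by simp)) (Finset.le_max' _ _ (by simp))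

lemma pairSwap_rels {m : ℕ} : ∀ r ∈ semifreeRels (kneser m),
    FreeGroup.lift (pairSwap (m := m)) r = 1 := by
  rintro r ⟨x, y, hadj, rfl⟩
  simp only [map_mul, map_inv, FreeGroup.lift_apply_of]
  have hd : Disjoint x.1 y.1 := hadj
  have hne : ∀ a ∈ x.1, ∀ b ∈ y.1, a ≠ b :=
    fun a ha b hb h => Finset.disjoint_left.mp hd ha (h ▸ hb)
  have hcomm : Commute (pairSwap x) (pairSwap y) := by
    apply swap_commute_of_ne <;>
      apply hne <;>
      first
        | exact Finset.min'_mem _ _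
        | exact Finset.max'_mem _ _
  rw [← commutatorElement_def]
  exact commutatorElement_eq_one_iff_commute.mpr hcomm

/-- The homomorphism `Γ_{KG(m,2)} → Sym(Fin m)` sending `{i,j}` to the transposition `(i j)`. -/
def toPerm (m : ℕ) : SemifreeGroup (kneser m) →* Equiv.Perm (Fin m) :=
  PresentedGroup.toGroup pairSwap_rels

lemma toPerm_xgen {m : ℕ} (i j : Fin m) : toPerm m (xgen m i j) = Equiv.swap i j := by
  unfold xgen
  split_ifs with h1 h2
  · subst h1
    rw [Equiv.swap_self]
    rfl
  · rw [toPerm, PresentedGroup.toGroup.of]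
    unfold pairSwap
    simp only [min'_pair, max'_pair]
    rw [min_eq_left h2.le, max_eq_right h2.le]
  · have hji : j < i := (not_lt.mp h2).lt_of_ne' h1
    rw [toPerm, map_inv, PresentedGroup.toGroup.of]
    unfold pairSwap
    simp only [min'_pair, max'_pair]
    rw [min_eq_right hji.le, max_eq_left hji.le, Equiv.swap_inv, Equiv.swap_comm]

/-- **Lemma (non-vanishing of cyclic products in `Γ_{KG(m,2)}`).**
Let `m ≥ 1` and let `t ≥ 3` be odd. Let `c₁,…,c_t ∈ [m]` (indexed cyclically, i.e. by
`ZMod t`) be colors with consecutive colors distinct. Then the product over `i = 1,…,t`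
of `x_{c_{i-1}, c_{i+1}}` (indices mod `t`) is not the identity of `Γ_{KG(m,2)}`. -/
theorem product_around_odd_cycle_ne_one (m t : ℕ) (hm : 1 ≤ m) (ht : 3 ≤ t)
    (htodd : Odd t) (c : ZMod t → Fin m)
    (hc : ∀ i : ZMod t, c (i + 1) ≠ c i) :
    ((List.range t).map
        (fun k : ℕ => xgen m (c ((k : ZMod t))) (c ((k : ZMod t) + 2)))).prod ≠ 1 := by
  intro hone
  have himg : ((List.range t).map
      (fun k : ℕ => Equiv.swap (c (k : ZMod t)) (c ((k : ZMod t) + 2)))).prod = 1 := by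
    have h := congrArg (toPerm m) hone
    rw [map_list_prod, List.map_map, map_one] at h
    rw [← h]
    apply congrArg
    apply List.map_congr_left
    intro k _
    simp [Function.comp, toPerm_xgen]
  have key : ∀ n k : ℕ, k + n = t →
      (((List.range' k n).map
        (fun k : ℕ => Equiv.swap (c (k : ZMod t)) (c ((k : ZMod t) + 2)))).prod) (c 1)
      = (if k % 2 = 0 then c (k : ZMod t) else c ((k : ZMod t) + 1)) := by
    intro n
    induction n with
    | zero =>
        intro k hk
        have hkt : k = t := by omega
        subst hkt
        have hmod : k % 2 = 1 := Nat.odd_iff.mp htodd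
        rw [if_neg (by omega)]
        simp only [List.range', List.map_nil, List.prod_nil, Equiv.Perm.one_apply]
        rw [ZMod.natCast_self, zero_add]
    | succ n ih =>
        intro k hk
        rw [List.range'_succ]
        simp only [List.map_cons, List.prod_cons, Equiv.Perm.mul_apply]
        have ihk := ih (k + 1) (by omega)
        rw [ihk]
        have hcast : ((k + 1 : ℕ) : ZMod t) = (k : ZMod t) + 1 := by push_cast; ring
        rcases Nat.even_or_odd k with hev | hod
        · -- k even : inner value is c (k+2), swap sends it to c k
          have hk2 : k % 2 = 0 := Nat.even_iff.mp hev
          have h1 : ¬ (k + 1) % 2 = 0 := by omega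
          rw [if_neg h1, if_pos hk2, hcast]
          have : (k : ZMod t) + 1 + 1 = (k : ZMod t) + 2 := by ring
          rw [this]
          exact Equiv.swap_apply_right _ _
        · -- k odd : inner value is c (k+1), fixed by the swap
          have hk2 : k % 2 = 1 := Nat.odd_iff.mp hod
          have h1 : (k + 1) % 2 = 0 := by omega
          rw [if_pos h1, if_neg (by omega), hcast]
          apply Equiv.swap_apply_of_ne_of_ne
          · exact hc (k : ZMod t)
          · have h2 : ((k : ZMod t) + 1) + 1 = (k : ZMod t) + 2 := by ring
            exact fun h => (hc ((k : ZMod t) + 1)) (h2 ▸ h.symm)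
  have h0 := key t 0 (by omega)
  rw [← List.range_eq_range'] at h0
  rw [himg] at h0
  have h0' : c 1 = c 0 := by simpa using h0
  exact hc 0 (by rw [zero_add, h0'])
end

section
/- If a graph G admits a local 3-coloring using at most 4 colors, then G has a proper coloring with at most 3 colors (i.e., χ(G) ≤ 3). Consequently, any graph with chromatic number greater than 3 requires at least 5 colors in any local 3-coloring. -/
/-- If a graph admits a local `3`-coloring (a proper coloring in which at most two
colors appear on each neighborhood) using at most `4` colors, then it is
`3`-colorable. Consequently, a graph with chromatic number greater than `3`
needs at least `5` colors in any local `3`-coloring. -/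
theorem local_three_coloring_with_four_colors (V : Type) (G : SimpleGraph V)
    (α : Type) (c : V → α)
    (hproper : ∀ u v : V, G.Adj u v → c u ≠ c v)
    (hlocal : ∀ v : V, (c '' G.neighborSet v).ncard ≤ 2) :
    ((∃ s : Finset α, (∀ v : V, c v ∈ s) ∧ s.card ≤ 4) → G.Colorable 3) ∧
    (¬ G.Colorable 3 → ∀ s : Finset α, (∀ v : V, c v ∈ s) → 5 ≤ s.card) := by
  have main : (∃ s : Finset α, (∀ v : V, c v ∈ s) ∧ s.card ≤ 4) → G.Colorable 3 := by
    rintro ⟨s, hcov, hcard⟩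
    classical
    by_cases hV : Nonempty V
    swap
    · exact ⟨⟨fun v => absurd ⟨v⟩ hV, fun {a} _ => absurd ⟨a⟩ hV⟩⟩
    obtain ⟨v₀⟩ := hV
    by_cases h3 : s.card ≤ 3
    · -- at most 3 colors: color directly into s
      have C : G.Coloring ↑s :=
        ⟨fun v => ⟨c v, hcov v⟩, fun {u v} h hh => hproper u v h (congrArg Subtype.val hh)⟩
      have h := C.colorable
      rw [Fintype.card_coe] at h
      exact h.mono h3
    · -- exactly 4 colors
      have hs4 : s.card = 4 := le_antisymm hcard (by omega)
      set d := c v₀ with hd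
      set t := s.erase d with ht
      have htcard : t.card = 3 := by
        rw [ht, Finset.card_erase_of_mem (hcov v₀), hs4]
      -- for each vertex colored d, pick a replacement color
      have hpick : ∀ v : V, c v = d → ∃ x ∈ (↑t : Set α), x ∉ c '' G.neighborSet v := by
        intro v hv
        apply Set.exists_mem_notMem_of_ncard_lt_ncard
        · have : (↑t : Set α).ncard = 3 := by rw [Set.ncard_coe_finset, htcard]
          rw [this]
          exact lt_of_le_of_lt (hlocal v) (by norm_num)
        · exact s.finite_toSet.subset (by rintro x ⟨u, _, rfl⟩; exact hcov u)
      choose pick hpickt hpickn using hpick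
      have hmem : ∀ v : V, c v ≠ d → c v ∈ t := fun v hv =>
        Finset.mem_erase.mpr ⟨hv, hcov v⟩
      let f : V → ↑t := fun v =>
        if h : c v = d then ⟨pick v h, hpickt v h⟩ else ⟨c v, hmem v h⟩
      have C : G.Coloring ↑t := by
        refine ⟨f, ?_⟩
        intro u v huv heq
        have hne := hproper u v huv
        simp only [f] at heq
        by_cases hu : c u = d <;> by_cases hv : c v = d
        · exact hne (hu.trans hv.symm)
        · rw [dif_pos hu, dif_neg hv] at heq
          exact hpickn u hu ⟨v, huv, (congrArg Subtype.val heq).symm⟩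
        · rw [dif_neg hu, dif_pos hv] at heq
          exact hpickn v hv ⟨u, huv.symm, congrArg Subtype.val heq⟩
        · rw [dif_neg hu, dif_neg hv] at heq
          exact hne (congrArg Subtype.val heq)
      have := C.colorable
      rwa [Fintype.card_coe, htcard] at this
  constructor
  · exact main
  · intro h s hcov
    by_contra hlt
    exact h (main ⟨s, hcov, by omega⟩)
end

section
/- Let m ≥ 3. An edge of U(m,3) joining vertices (i,A) and (j,B) is contained in a triangle of U(m,3) if and only if there exists k ∈ [m], distinct from i and j, such that A = {j,k} and B = {i,k}. Moreover, every triangle of U(m,3) has vertex set of the form {(i,{j,k}), (j,{i,k}), (k,{i,j})} for some distinct i,j,k ∈ [m]. -/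
/-- Vertices of the graph `U(m,r)`: pairs `(i, A)` with `i ∈ [m]`, `A ⊆ [m]`,
`i ∉ A` and `|A| = r - 1` (here `[m]` is modelled by `Fin m`). -/
abbrev UVert (m r : ℕ) : Type :=
  {p : Fin m × Finset (Fin m) // p.1 ∉ p.2 ∧ p.2.card = r - 1}

/-- The universal graph `U(m,r)` for local `r`-colorings with at most `m` colors:
`(i,A)` and `(j,B)` are adjacent iff `i ∈ B` and `j ∈ A`. -/
def Ugraph (m r : ℕ) : SimpleGraph (UVert m r) where
  Adj p q := p.1.1 ∈ q.1.2 ∧ q.1.1 ∈ p.1.2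
  symm := ⟨fun _ _ h => ⟨h.2, h.1⟩⟩
  loopless := ⟨fun p h => p.2.1 h.1⟩

/-- The natural coloring of `U(m,r)`, assigning color `i` to the vertex `(i,A)`. -/
def naturalColoring (m r : ℕ) : UVert m r → Fin m := fun p => p.1.1

/-- An edge of `U(m,3)` joining `(i,A)` and `(j,B)` is a *triangle edge* if for
some `k` distinct from `i` and `j` one has `A = {j,k}` and `B = {i,k}`. -/
def IsTriangleEdge (m : ℕ) (p q : UVert m 3) : Prop :=
  ∃ k : Fin m, k ≠ p.1.1 ∧ k ≠ q.1.1 ∧ p.1.1 ≠ q.1.1 ∧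
    p.1.2 = {q.1.1, k} ∧ q.1.2 = {p.1.1, k}

lemma pair_eq_of_card_two {m : ℕ} {A : Finset (Fin m)} {j k : Fin m}
    (hjk : j ≠ k) (hj : j ∈ A) (hk : k ∈ A) (hA : A.card = 2) : A = {j, k} := by
  refine (Finset.eq_of_subset_of_card_le ?_ ?_).symm
  · intro x hx
    simp only [Finset.mem_insert, Finset.mem_singleton] at hx
    rcases hx with rfl | rfl <;> assumption
  · rw [hA, Finset.card_pair hjk]

/-- An edge of `U(m,3)` joining `(i,A)` and `(j,B)` lies in a triangle of `U(m,3)` iff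
there is `k ∈ [m]`, distinct from `i` and `j`, with `A = {j,k}` and `B = {i,k}`;
moreover every triangle of `U(m,3)` has vertex set
`{(i,{j,k}), (j,{i,k}), (k,{i,j})}` for some distinct `i,j,k ∈ [m]`. -/
theorem triangle_edges_of_U (m : ℕ) (hm : 3 ≤ m) :
    (∀ p q : UVert m 3, (Ugraph m 3).Adj p q →
      ((∃ w : UVert m 3, (Ugraph m 3).Adj p w ∧ (Ugraph m 3).Adj q w) ↔
        ∃ k : Fin m, k ≠ p.1.1 ∧ k ≠ q.1.1 ∧
          p.1.2 = {q.1.1, k} ∧ q.1.2 = {p.1.1, k})) ∧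
    (∀ p q w : UVert m 3,
      (Ugraph m 3).Adj p q → (Ugraph m 3).Adj q w → (Ugraph m 3).Adj p w →
      ∃ i j k : Fin m, i ≠ j ∧ i ≠ k ∧ j ≠ k ∧
        ({p.1, q.1, w.1} : Set (Fin m × Finset (Fin m))) =
          {(i, {j, k}), (j, {i, k}), (k, {i, j})}) := by
  constructor
  · intro p q hpq
    obtain ⟨hiB, hjA⟩ := hpq
    constructor
    · rintro ⟨w, ⟨hiC, hkA⟩, ⟨hjC, hkB⟩⟩
      refine ⟨w.1.1, fun h => p.2.1 (by rw [← h]; exact hkA), fun h => q.2.1 (by rw [← h]; exact hkB), ?_, ?_⟩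
      · exact pair_eq_of_card_two (show q.1.1 ≠ w.1.1 from fun h => w.2.1 (by rw [← h]; exact hjC)) hjA hkA p.2.2
      · exact pair_eq_of_card_two (show p.1.1 ≠ w.1.1 from fun h => w.2.1 (by rw [← h]; exact hiC)) hiB hkB q.2.2
    · rintro ⟨k, hki, hkj, hA, hB⟩
      have hij : p.1.1 ≠ q.1.1 := fun h => p.2.1 (h ▸ hjA)
      have hk : k ∉ ({p.1.1, q.1.1} : Finset (Fin m)) := by
        simp [hki, hkj]
      refine ⟨⟨(k, {p.1.1, q.1.1}), hk, Finset.card_pair hij⟩, ⟨?_, ?_⟩, ?_, ?_⟩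
      · simp
      · rw [hA]; simp
      · simp
      · rw [hB]; simp
  · intro p q w hpq hqw hpw
    obtain ⟨h1, h2⟩ := hpq
    obtain ⟨h3, h4⟩ := hqw
    obtain ⟨h5, h6⟩ := hpw
    -- p = (i,A), q = (j,B), w = (k,C)
    set i := p.1.1; set j := q.1.1; set k := w.1.1
    have hij : i ≠ j := fun h => p.2.1 (by rw [show p.1.1 = j from h]; exact h2)
    have hik : i ≠ k := fun h => p.2.1 (by rw [show p.1.1 = k from h]; exact h6)
    have hjk : j ≠ k := fun h => q.2.1 (by rw [show q.1.1 = k from h]; exact h4)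
    have hA : p.1.2 = {j, k} := pair_eq_of_card_two hjk h2 h6 p.2.2
    have hB : q.1.2 = {i, k} := pair_eq_of_card_two hik h1 h4 q.2.2
    have hC : w.1.2 = {i, j} := pair_eq_of_card_two hij h5 h3 w.2.2
    refine ⟨i, j, k, hij, hik, hjk, ?_⟩
    have hp : p.1 = (i, {j, k}) := Prod.ext rfl hA
    have hq : q.1 = (j, {i, k}) := Prod.ext rfl hB
    have hw : w.1 = (k, {i, j}) := Prod.ext rfl hC
    rw [hp, hq, hw]
end

section
/- In the semi-free group Γ_{KG(4,2)}, consider the element g = x_{4,1} · x_{1,3} · x_{2,1} · x_{1,4} · x_{3,1} · x_{1,2} (which equals {1,4}^{-1}{1,3}{1,2}^{-1}{1,4}{1,3}^{-1}{1,2}, arising from a 9-cycle colored 2,1,2,3,1,3,4,1,4). Then g ≠ ε in Γ_{KG(4,2)}, but the image of g under the natural map to the abelianization of Γ_{KG(4,2)} is the identity. -/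
namespace NBTaux

/-- Assignment of the six generators to permutations of `Fin 3`; complementary
pairs get equal values, so all commuting relations are satisfied. -/
def f (s : {s : Finset (Fin 4) // s.card = 2}) : Equiv.Perm (Fin 3) :=
  if s.1 = {0, 2} ∨ s.1 = {1, 3} then Equiv.swap 1 2
  else if s.1 = {0, 1} ∨ s.1 = {2, 3} then Equiv.swap 0 1
  else 1

lemma f_adj : ∀ x y : {s : Finset (Fin 4) // s.card = 2},
    Disjoint x.1 y.1 → f x = f y := by decide

lemma f_rels : ∀ r ∈ semifreeRels (kneser 4), (FreeGroup.lift f) r = 1 := by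
  rintro r ⟨x, y, hxy, rfl⟩
  have h : f x = f y := f_adj x y hxy
  simp [h]

/-- The induced homomorphism. -/
def φ : SemifreeGroup (kneser 4) →* Equiv.Perm (Fin 3) :=
  PresentedGroup.toGroup f_rels

lemma xgen_lt {i j : Fin 4} (h : i ≠ j) (hlt : i < j) :
    xgen 4 i j = PresentedGroup.of ⟨({i, j} : Finset (Fin 4)), Finset.card_pair h⟩ := by
  rw [xgen, dif_neg h, if_pos hlt]

lemma xgen_gt {i j : Fin 4} (h : i ≠ j) (hlt : ¬ i < j) :
    xgen 4 i j = (PresentedGroup.of ⟨({i, j} : Finset (Fin 4)), Finset.card_pair h⟩)⁻¹ := by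
  rw [xgen, dif_neg h, if_neg hlt]

lemma xgen_symm {i j : Fin 4} (h : i < j) : xgen 4 j i = (xgen 4 i j)⁻¹ := by
  rw [xgen_lt (ne_of_lt h) h, xgen_gt (ne_of_gt h) (not_lt_of_gt h),
    show (⟨({j, i} : Finset (Fin 4)), Finset.card_pair (ne_of_gt h)⟩ :
        {s : Finset (Fin 4) // s.card = 2}) = ⟨{i, j}, Finset.card_pair (ne_of_lt h)⟩ from
      Subtype.ext (Finset.pair_comm j i)]

end NBTaux

open NBTaux in
/-- The element `g = x_{4,1} x_{1,3} x_{2,1} x_{1,4} x_{3,1} x_{1,2}` of `Γ_{KG(4,2)}`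
(here `[4] = {1,2,3,4}` is modelled by `Fin 4 = {0,1,2,3}`, with color `i+1`
corresponding to `(i : Fin 4)`) is nontrivial, but its image in the abelianization
of `Γ_{KG(4,2)}` is the identity. -/
theorem nontrivial_but_trivial_in_abelianization :
    (xgen 4 3 0 * xgen 4 0 2 * xgen 4 1 0 * xgen 4 0 3 * xgen 4 2 0 * xgen 4 0 1 ≠ 1) ∧
    Abelianization.of
      (xgen 4 3 0 * xgen 4 0 2 * xgen 4 1 0 * xgen 4 0 3 * xgen 4 2 0 * xgen 4 0 1) = 1 := by
  have e1 : xgen 4 3 0 = (xgen 4 0 3)⁻¹ := xgen_symm (by decide)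
  have e2 : xgen 4 1 0 = (xgen 4 0 1)⁻¹ := xgen_symm (by decide)
  have e3 : xgen 4 2 0 = (xgen 4 0 2)⁻¹ := xgen_symm (by decide)
  constructor
  · intro hg
    have h1 : φ (xgen 4 3 0 * xgen 4 0 2 * xgen 4 1 0 * xgen 4 0 3 * xgen 4 2 0 * xgen 4 0 1)
        = 1 := by rw [hg]; exact map_one φ
    rw [e1, e2, e3,
      xgen_lt (i := 0) (j := 3) (by decide) (by decide),
      xgen_lt (i := 0) (j := 1) (by decide) (by decide),
      xgen_lt (i := 0) (j := 2) (by decide) (by decide)] at h1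
    simp only [map_mul, map_inv, φ, PresentedGroup.toGroup.of] at h1
    revert h1
    decide
  · rw [e1, e2, e3]
    simp only [map_mul, map_inv]
    set a := Abelianization.of (xgen 4 0 3)
    set b := Abelianization.of (xgen 4 0 2)
    set c := Abelianization.of (xgen 4 0 1)
    have h : a⁻¹ * b * c⁻¹ * a * b⁻¹ * c = (a⁻¹*a)*((b*b⁻¹)*(c⁻¹*c)) := by ac_rfl
    simp [h]
end

section
/- Let m ≥ r ≥ 1 be integers. A graph G admits a local r-coloring using at most m colors if and only if there exists a graph homomorphism from G to U(m,r). -/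
/-- A graph `G` admits a local `r`-coloring using at most `m` colors if and only if
there is a graph homomorphism from `G` to `U(m,r)`. -/
theorem local_coloring_iff_hom_to_U (m r : ℕ) (hr : 1 ≤ r) (hrm : r ≤ m)
    (V : Type) (G : SimpleGraph V) :
    (∃ c : V → Fin m,
        (∀ u v : V, G.Adj u v → c u ≠ c v) ∧
        ∀ v : V, (c '' G.neighborSet v).ncard ≤ r - 1) ↔
    Nonempty (G →g Ugraph m r) := by
  constructor
  · rintro ⟨c, hc, hcard⟩
    have hfin : ∀ v : V, (c '' G.neighborSet v).Finite := fun v => Set.toFinite _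
    have key : ∀ v : V, ∃ A : Finset (Fin m),
        (hfin v).toFinset ⊆ A ∧ A ⊆ {c v}ᶜ ∧ A.card = r - 1 := by
      intro v
      refine Finset.exists_subsuperset_card_eq ?_ ?_ ?_
      · intro x hx
        simp only [Set.Finite.mem_toFinset] at hx
        obtain ⟨u, hu, hcu⟩ := hx
        simp only [Finset.mem_compl, Finset.mem_singleton]
        intro hxc
        exact hc v u hu ((hcu.trans hxc).symm)
      · have := hcard v
        rwa [Set.ncard_eq_toFinset_card _ (hfin v)] at this
      · rw [Finset.card_compl]
        simp only [Finset.card_singleton, Fintype.card_fin]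
        omega
    choose A hA1 hA2 hA3 using key
    refine ⟨⟨fun v => ⟨(c v, A v), ?_, hA3 v⟩, ?_⟩⟩
    · intro h
      have := hA2 _ h
      simp at this
    · intro u v huv
      constructor
      · exact hA1 v (by simp only [Set.Finite.mem_toFinset]; exact ⟨u, by simpa using huv.symm, rfl⟩)
      · exact hA1 u (by simp only [Set.Finite.mem_toFinset]; exact ⟨v, by simpa using huv, rfl⟩)
  · rintro ⟨f⟩
    refine ⟨fun v => (f v).1.1, ?_, ?_⟩
    · intro u v huv h
      have hadj := f.map_adj huv
      have h1 : (f u).1.1 ∈ (f v).1.2 := hadj.1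
      have h2 : (f v).1.1 ∉ (f v).1.2 := (f v).2.1
      have h' : (f u).1.1 = (f v).1.1 := h
      rw [h'] at h1
      exact h2 h1
    · intro v
      have hsub : (fun u => (f u).1.1) '' G.neighborSet v ⊆ ↑(f v).1.2 := by
        rintro x ⟨u, hu, rfl⟩
        exact (f.map_adj hu).2
      calc ((fun u => (f u).1.1) '' G.neighborSet v).ncard
          ≤ (↑(f v).1.2 : Set (Fin m)).ncard :=
            Set.ncard_le_ncard hsub (Set.toFinite _)
        _ = (f v).1.2.card := Set.ncard_coe_finset _
        _ = r - 1 := (f v).2.2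
end
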